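/- Let p be a prime, k a perfect field of characteristic p, and l a natural number. Let R = k[[x₁,…,x_l]] be the ring of formal power series in l variables over k and let R^p denote the subring of R which is the range of the Frobenius endomorphism f ↦ f^p. Then the family of monomials x₁^{e₁}⋯x_l^{e_l}, indexed by the tuples (e₁,…,e_l) with 0 ≤ e_i ≤ p−1 for all i, is a basis of R as a module over the subring R^p. -/

import Mathlib

set_option linter.unusedSectionVars false

open MvPowerSeries Finsupp Finset

/-- `k[[x₁,…,x_l]]` has characteristic `p` when `k` does. -/
instance MvPowerSeries.instCharP (p : ℕ) (σ k : Type*) [Field k] [CharP k p] :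
    CharP (MvPowerSeries σ k) p :=
  charP_of_injective_ringHom
    (f := MvPowerSeries.C (σ := σ) (R := k))
    (fun a b hab => by
      simpa using congrArg (MvPowerSeries.constantCoeff (σ := σ) (R := k)) hab) p

section Poly
variable {p : ℕ} [Fact p.Prime] {k : Type*} [Field k] [CharP k p]
  {σ : Type*} [DecidableEq σ]

private lemma psmul_inj {u q : σ →₀ ℕ} (h : p • u = p • q) : u = q := by
  have hp : 0 < p := (Fact.out : p.Prime).pos
  ext i
  have := DFunLike.congr_fun h i
  simp only [Finsupp.smul_apply, smul_eq_mul] at this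
  exact Nat.eq_of_mul_eq_mul_left hp this

private lemma polyA (T : MvPolynomial σ k) (q : σ →₀ ℕ) :
    MvPolynomial.coeff (p • q) (T ^ p) = (MvPolynomial.coeff q T) ^ p := by
  induction T using MvPolynomial.induction_on' with
  | monomial u a =>
    rw [MvPolynomial.monomial_pow, MvPolynomial.coeff_monomial,
      MvPolynomial.coeff_monomial]
    by_cases h : u = q
    · simp [h]
    · rw [if_neg (fun hc => h (psmul_inj hc)), if_neg h, zero_pow
        (Fact.out : p.Prime).ne_zero]
  | add f g hf hg =>
    rw [add_pow_char, MvPolynomial.coeff_add, MvPolynomial.coeff_add, hf, hg,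
      add_pow_char]

private lemma polyB (T : MvPolynomial σ k) (d : σ →₀ ℕ) (h : ∀ q, d ≠ p • q) :
    MvPolynomial.coeff d (T ^ p) = 0 := by
  induction T using MvPolynomial.induction_on' with
  | monomial u a =>
    rw [MvPolynomial.monomial_pow, MvPolynomial.coeff_monomial,
      if_neg (fun hc => h u hc.symm)]
  | add f g hf hg =>
    rw [add_pow_char, MvPolynomial.coeff_add, hf, hg, add_zero]

end Poly

section PS
variable {p : ℕ} [Fact p.Prime] {k : Type*} [Field k] [CharP k p]
  {σ : Type*} [DecidableEq σ]

private lemma coeff_mul_eq_zero {h : MvPowerSeries σ k} (g : MvPowerSeries σ k)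
    {d : σ →₀ ℕ} (hh : ∀ u ≤ d, MvPowerSeries.coeff u h = 0) :
    MvPowerSeries.coeff d (h * g) = 0 := by
  rw [MvPowerSeries.coeff_mul]
  refine Finset.sum_eq_zero fun uv huv => ?_
  rw [Finset.HasAntidiagonal.mem_antidiagonal] at huv
  rw [hh uv.1 (le_iff_exists_add.mpr ⟨uv.2, huv.symm⟩), zero_mul]

private lemma coeff_eq_zero_of_dvd {h w : MvPowerSeries σ k} (hd : h ∣ w)
    {d : σ →₀ ℕ} (hh : ∀ u ≤ d, MvPowerSeries.coeff u h = 0) :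
    MvPowerSeries.coeff d w = 0 := by
  obtain ⟨g, rfl⟩ := hd
  exact coeff_mul_eq_zero g hh

private lemma coeff_pow_trunc (f : MvPowerSeries σ k) {d n : σ →₀ ℕ}
    (hn : ∀ u ≤ d, u < n) :
    MvPowerSeries.coeff d (f ^ p)
      = MvPowerSeries.coeff d ((MvPowerSeries.trunc k n f : MvPowerSeries σ k) ^ p) := by
  set T : MvPowerSeries σ k := (MvPowerSeries.trunc k n f : MvPowerSeries σ k)
  have hz : MvPowerSeries.coeff d (f ^ p - T ^ p) = 0 := by
    refine coeff_eq_zero_of_dvd (sub_dvd_pow_sub_pow f T p) fun u hu => ?_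
    rw [map_sub, MvPolynomial.coeff_coe, MvPowerSeries.coeff_trunc,
      if_pos (hn u hu), sub_self]
  rw [map_sub, sub_eq_zero] at hz
  exact hz

private lemma coeff_frob_smul (f : MvPowerSeries σ k) (q : σ →₀ ℕ) :
    MvPowerSeries.coeff (p • q) (f ^ p) = (MvPowerSeries.coeff q f) ^ p := by
  rcases isEmpty_or_nonempty σ with hσ | ⟨⟨i₀⟩⟩
  · obtain rfl : q = 0 := Subsingleton.elim _ _
    rw [smul_zero, MvPowerSeries.coeff_zero_eq_constantCoeff, map_pow]
  · set n : σ →₀ ℕ := p • q + Finsupp.single i₀ 1 with hn_def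
    have hsp : (0 : σ →₀ ℕ) < Finsupp.single i₀ 1 :=
      pos_iff_ne_zero.mpr (by
        intro hc
        simpa using DFunLike.congr_fun hc i₀)
    have hn : ∀ u ≤ p • q, u < n := fun u hu =>
      lt_of_le_of_lt hu (lt_add_of_pos_right _ hsp)
    rw [coeff_pow_trunc f hn, ← MvPolynomial.coe_pow, MvPolynomial.coeff_coe,
      polyA, MvPowerSeries.coeff_trunc, if_pos]
    have hq : q ≤ p • q := by
      intro i
      simp only [Finsupp.smul_apply, smul_eq_mul]
      exact Nat.le_mul_of_pos_left _ (Fact.out : p.Prime).pos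
    exact hn q hq

private lemma coeff_frob_ne (f : MvPowerSeries σ k) {d : σ →₀ ℕ}
    (h : ∀ q, d ≠ p • q) : MvPowerSeries.coeff d (f ^ p) = 0 := by
  rcases isEmpty_or_nonempty σ with hσ | ⟨⟨i₀⟩⟩
  · exact absurd (Subsingleton.elim d (p • 0)) (h 0)
  · set n : σ →₀ ℕ := d + Finsupp.single i₀ 1 with hn_def
    have hsp : (0 : σ →₀ ℕ) < Finsupp.single i₀ 1 :=
      pos_iff_ne_zero.mpr (by
        intro hc
        simpa using DFunLike.congr_fun hc i₀)
    have hn : ∀ u ≤ d, u < n := fun u hu =>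
      lt_of_le_of_lt hu (lt_add_of_pos_right _ hsp)
    rw [coeff_pow_trunc f hn, ← MvPolynomial.coe_pow, MvPolynomial.coeff_coe,
      polyB _ _ h]

end PS
section Main

variable {p : ℕ} [Fact p.Prime] {k : Type*} [Field k] [CharP k p] {l : ℕ}

private noncomputable def emb {p l : ℕ} (e : Fin l → Fin p) : Fin l →₀ ℕ :=
  ∑ i, Finsupp.single i (e i : ℕ)

private lemma emb_apply {p l : ℕ} (e : Fin l → Fin p) (j : Fin l) :
    emb e j = (e j : ℕ) := by
  rw [emb, Finsupp.finset_sum_apply]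
  simp [Finsupp.single_apply]

private noncomputable def dq (p : ℕ) {l : ℕ} (d : Fin l →₀ ℕ) : Fin l →₀ ℕ :=
  d.mapRange (· / p) (Nat.zero_div p)

private def dr (p : ℕ) [Fact p.Prime] {l : ℕ} (d : Fin l →₀ ℕ) : Fin l → Fin p :=
  fun i => ⟨d i % p, Nat.mod_lt _ (Fact.out : p.Prime).pos⟩

private lemma prod_X_pow (e : Fin l → Fin p) :
    (∏ i : Fin l, (MvPowerSeries.X i : MvPowerSeries (Fin l) k) ^ ((e i : ℕ)))
      = MvPowerSeries.monomial (emb e) 1 := by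
  rw [emb]
  induction (Finset.univ : Finset (Fin l)) using Finset.cons_induction with
  | empty => simp
  | cons a s ha ih =>
    rw [Finset.prod_cons, Finset.sum_cons, ih, MvPowerSeries.X_pow_eq,
      MvPowerSeries.monomial_mul_monomial, one_mul]

private lemma coeff_sum_rep (h : (Fin l → Fin p) → MvPowerSeries (Fin l) k)
    (d : Fin l →₀ ℕ) :
    MvPowerSeries.coeff d
        (∑ e : Fin l → Fin p, (h e) ^ p * MvPowerSeries.monomial (emb e) 1)
      = (MvPowerSeries.coeff (dq p d) (h (dr p d))) ^ p := by
  have hp : 0 < p := (Fact.out : p.Prime).pos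
  rw [map_sum, Finset.sum_eq_single (dr p d)]
  · have hle : emb (dr p d) ≤ d := by
      intro i
      rw [emb_apply]
      exact Nat.mod_le _ _
    have hsub : d - emb (dr p d) = p • dq p d := by
      ext i
      rw [Finsupp.tsub_apply, emb_apply, Finsupp.smul_apply, smul_eq_mul]
      show d i - d i % p = p * ((dq p d) i)
      rw [dq, Finsupp.mapRange_apply]
      have h1 := Nat.div_add_mod (d i) p
      omega
    rw [MvPowerSeries.coeff_mul_monomial, if_pos hle, mul_one, hsub,
      coeff_frob_smul]
  · intro e _ hne
    rw [MvPowerSeries.coeff_mul_monomial]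
    split_ifs with hle
    · rw [mul_one]
      refine coeff_frob_ne _ fun q hq => hne ?_
      funext i
      have h1 : (d - emb e) i = p * q i := by
        rw [hq, Finsupp.smul_apply, smul_eq_mul]
      rw [Finsupp.tsub_apply, emb_apply] at h1
      have h2 : (e i : ℕ) ≤ d i := by
        have := hle i
        rwa [emb_apply] at this
      have h3 : d i = (e i : ℕ) + p * q i := by omega
      apply Fin.ext
      show (e i : ℕ) = d i % p
      rw [h3, Nat.add_mul_mod_self_left, Nat.mod_eq_of_lt (e i).2]
    · rfl
  · intro hd
    exact absurd (Finset.mem_univ _) hd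

end Main

/-- Let `k` be a perfect field of characteristic `p` and `R = k[[x₁,…,x_l]]`.  The monomials
`x₁^{e₁} ⋯ x_l^{e_l}` with `0 ≤ e_i ≤ p - 1` form a basis of `R` as a module over the subring
`R^p`, the range of the Frobenius endomorphism `f ↦ f^p`. -/
theorem mvPowerSeries_basis_over_frobenius_range
    (p : ℕ) [Fact p.Prime] (k : Type*) [Field k] [CharP k p] [PerfectRing k p] (l : ℕ) :
    ∃ b : Module.Basis (Fin l → Fin p) ((frobenius (MvPowerSeries (Fin l) k) p).range)
        (MvPowerSeries (Fin l) k),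
      ∀ e : Fin l → Fin p, b e = ∏ i : Fin l, (MvPowerSeries.X i) ^ ((e i : ℕ)) := by
  classical
  set R := MvPowerSeries (Fin l) k
  set S := (frobenius R p).range with hS
  set v : (Fin l → Fin p) → R := fun e => ∏ i : Fin l, (MvPowerSeries.X i) ^ ((e i : ℕ))
    with hv_def
  have hv : ∀ e, v e = MvPowerSeries.monomial (emb e) 1 := fun e => prod_X_pow e
  have hsmul : ∀ (c : S) (r : R), c • r = (c : R) * r := fun c r => rfl
  have hli : LinearIndependent S v := by
    rw [Fintype.linearIndependent_iff]
    intro g hg e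
    choose h hh using fun e' => (g e').2
    have hsum : ∑ e' : Fin l → Fin p, (h e') ^ p * MvPowerSeries.monomial (emb e') 1
        = 0 := by
      rw [← hg]
      refine (Finset.sum_congr rfl fun e' _ => ?_).symm
      rw [hsmul, ← hh e', frobenius_def, hv]
    have hzero : h e = 0 := by
      ext q
      have hd := congrArg (MvPowerSeries.coeff (p • q + emb e)) hsum
      rw [coeff_sum_rep, map_zero] at hd
      have hdr : dr p (p • q + emb e) = e := by
        funext i
        apply Fin.ext
        show (p • q + emb e) i % p = (e i : ℕ)
        rw [Finsupp.add_apply, Finsupp.smul_apply, smul_eq_mul, emb_apply,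
          Nat.mul_add_mod, Nat.mod_eq_of_lt (e i).2]
      have hdq : dq p (p • q + emb e) = q := by
        ext i
        show (p • q + emb e) i / p = q i
        rw [Finsupp.add_apply, Finsupp.smul_apply, smul_eq_mul, emb_apply,
          Nat.mul_add_div (Fact.out : p.Prime).pos,
          Nat.div_eq_of_lt (e i).2, add_zero]
      rw [hdr, hdq] at hd
      rw [map_zero]
      exact pow_eq_zero_iff (Fact.out : p.Prime).ne_zero |>.mp hd
    apply Subtype.ext
    rw [← hh e, hzero, map_zero, ZeroMemClass.coe_zero]
  have hsp : ⊤ ≤ Submodule.span S (Set.range v) := by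
    intro f _
    set h : (Fin l → Fin p) → R := fun e =>
      (fun q => (frobeniusEquiv k p).symm (MvPowerSeries.coeff (p • q + emb e) f) :
        (Fin l →₀ ℕ) → k) with hh_def
    have hrep : f = ∑ e : Fin l → Fin p, (h e) ^ p * MvPowerSeries.monomial (emb e) 1 := by
      ext d
      rw [coeff_sum_rep]
      have hc : MvPowerSeries.coeff (dq p d) (h (dr p d))
          = (frobeniusEquiv k p).symm
              (MvPowerSeries.coeff (p • dq p d + emb (dr p d)) f) := rfl
      have hrec : p • dq p d + emb (dr p d) = d := by
        ext i
        show p * ((dq p d) i) + emb (dr p d) i = d i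
        rw [dq, Finsupp.mapRange_apply, emb_apply]
        show p * (d i / p) + d i % p = d i
        exact Nat.div_add_mod (d i) p
      rw [hc, hrec, frobeniusEquiv_symm_pow_p]
    rw [hrep]
    refine Submodule.sum_mem _ fun e _ => ?_
    have hmem : (h e) ^ p ∈ S := ⟨h e, rfl⟩
    have : (h e) ^ p * MvPowerSeries.monomial (emb e) 1
        = (⟨(h e) ^ p, hmem⟩ : S) • v e := by
      rw [hsmul, hv]
    rw [this]
    exact Submodule.smul_mem _ _ (Submodule.subset_span ⟨e, rfl⟩)
  exact ⟨Module.Basis.mk hli hsp, fun e => Module.Basis.mk_apply hli hsp e⟩
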